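/- Let M > 0 and a > 3√3·M, and let r₁ < r₂ be the two positive roots of r ↦ 1 − 2M/r − r²/a² (so r₁ ∈ (0, a/√3) and r₂ ∈ (a/√3, a)). Then lim_{r → r₁⁺} (1 − 2M/r − r²/a²)^(1/2) · ∫_{3M}^r s·(1 − 2M/s − s²/a²)^(−3/2) ds = 2a²r₁²/(3r₁² − a²), and lim_{r → r₂⁻} (1 − 2M/r − r²/a²)^(1/2) · ∫_{3M}^r s·(1 − 2M/s − s²/a²)^(−3/2) ds = 2a²r₂²/(3r₂² − a²). -/

import Mathlib

open MeasureTheory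

noncomputable def mcAA (r₁ r₂ : ℝ) : ℝ := r₁^2 + r₁*r₂ + r₂^2
noncomputable def mcAL (r₁ r₂ : ℝ) : ℝ :=
  2*mcAA r₁ r₂*(r₁^2+4*r₁*r₂+r₂^2)/((r₁-r₂)^2*((2*r₁+r₂)*(r₁+2*r₂)))
noncomputable def mcBE (r₁ r₂ : ℝ) : ℝ :=
  -6*mcAA r₁ r₂*(r₁*r₂)*(r₁+r₂)/((r₁-r₂)^2*((2*r₁+r₂)*(r₁+2*r₂)))
noncomputable def mcPHI (r₁ r₂ s : ℝ) : ℝ := mcAL r₁ r₂ * s^2 + mcBE r₁ r₂ * s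
noncomputable def mcC1 (r₁ r₂ : ℝ) : ℝ := -2*(mcBE r₁ r₂ + mcAL r₁ r₂*(r₁+r₂))
noncomputable def mcC0 (r₁ r₂ : ℝ) : ℝ :=
  2*mcAA r₁ r₂ + 2*mcAL r₁ r₂*(r₁*r₂) + mcC1 r₁ r₂*(r₁+r₂)
noncomputable def mcH (r₁ r₂ s : ℝ) : ℝ :=
  (2*mcAL r₁ r₂*s^2 - mcC1 r₁ r₂*s - mcC0 r₁ r₂)/(2*(s+(r₁+r₂)))
noncomputable def mcPSI (r₁ r₂ s : ℝ) : ℝ := mcH r₁ r₂ s - (2*mcAL r₁ r₂*s + mcBE r₁ r₂)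

lemma mcAA_pos {r₁ r₂ : ℝ} (h1 : 0 < r₁) (h2 : r₁ < r₂) : 0 < mcAA r₁ r₂ := by
  unfold mcAA; nlinarith

lemma mc_nonzeros {r₁ r₂ : ℝ} (h1 : 0 < r₁) (h2 : r₁ < r₂) :
    mcAA r₁ r₂ ≠ 0 ∧ (r₁-r₂)^2*((2*r₁+r₂)*(r₁+2*r₂)) ≠ 0 := by
  refine ⟨ne_of_gt (mcAA_pos h1 h2), ?_⟩
  have h : r₁ - r₂ ≠ 0 := by linarith
  have h2' : (0:ℝ) < (2*r₁+r₂)*(r₁+2*r₂) := by nlinarith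
  exact mul_ne_zero (pow_ne_zero _ h) (ne_of_gt h2')

lemma mc_key {r₁ r₂ : ℝ} (x : ℝ) (h1 : 0 < r₁) (h2 : r₁ < r₂) (hx : 0 < x) :
    x + mcPHI r₁ r₂ x * ((r₁*r₂*(r₁+r₂) - 2*x^3)/(mcAA r₁ r₂*x^2))/2
      = ((x-r₁)*(r₂-x)*(x+(r₁+r₂))/(mcAA r₁ r₂*x)) * mcH r₁ r₂ x := by
  obtain ⟨hA, hD⟩ := mc_nonzeros h1 h2
  have hx0 : x ≠ 0 := ne_of_gt hx
  have hb : x + (r₁+r₂) ≠ 0 := by nlinarith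
  have hf1 : r₁ - r₂ ≠ 0 := by linarith
  have hf2 : 2*r₁ + r₂ ≠ 0 := by linarith
  have hf3 : r₁ + 2*r₂ ≠ 0 := by linarith
  unfold mcPSI mcH mcC0 mcC1 mcPHI mcAL mcBE at *
  field_simp
  ring

lemma mc_phi_val₁ {r₁ r₂ : ℝ} (h1 : 0 < r₁) (h2 : r₁ < r₂) :
    mcPHI r₁ r₂ r₁ = 2*mcAA r₁ r₂*r₁^2/(3*r₁^2 - mcAA r₁ r₂) := by
  obtain ⟨hA, hD⟩ := mc_nonzeros h1 h2
  have hden : 3*r₁^2 - mcAA r₁ r₂ ≠ 0 := by unfold mcAA; nlinarith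
  have hf1 : r₁ - r₂ ≠ 0 := by linarith
  have hf2 : 2*r₁ + r₂ ≠ 0 := by linarith
  have hf3 : r₁ + 2*r₂ ≠ 0 := by linarith
  rw [eq_div_iff hden]
  unfold mcPHI mcAL mcBE mcAA at *
  field_simp
  ring

lemma mc_phi_val₂ {r₁ r₂ : ℝ} (h1 : 0 < r₁) (h2 : r₁ < r₂) :
    mcPHI r₁ r₂ r₂ = 2*mcAA r₁ r₂*r₂^2/(3*r₂^2 - mcAA r₁ r₂) := by
  obtain ⟨hA, hD⟩ := mc_nonzeros h1 h2
  have hden : 3*r₂^2 - mcAA r₁ r₂ ≠ 0 := by unfold mcAA; nlinarith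
  have hf1 : r₁ - r₂ ≠ 0 := by linarith
  have hf2 : 2*r₁ + r₂ ≠ 0 := by linarith
  have hf3 : r₁ + 2*r₂ ≠ 0 := by linarith
  rw [eq_div_iff hden]
  unfold mcPHI mcAL mcBE mcAA at *
  field_simp
  ring

lemma mc_kfact {M a r₁ r₂ : ℝ} (x : ℝ) (ha : a ≠ 0) (hx : x ≠ 0) (hA : mcAA r₁ r₂ ≠ 0)
    (ha2 : a^2 = mcAA r₁ r₂) (hM2 : 2*M*a^2 = r₁*r₂*(r₁+r₂)) :
    1 - 2*M/x - x^2/a^2 = (x-r₁)*(r₂-x)*(x+(r₁+r₂))/(mcAA r₁ r₂*x) := by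
  have ha2' : (a:ℝ)^2 ≠ 0 := pow_ne_zero _ ha
  have hMv : M = r₁*r₂*(r₁+r₂)/(2*a^2) := by
    field_simp; linarith [hM2]
  rw [hMv, ha2] at *
  field_simp
  unfold mcAA at *
  ring

lemma mc_kpos {M a r₁ r₂ : ℝ} (x : ℝ) (h1 : 0 < r₁) (h2 : r₁ < r₂) (hx : x ∈ Set.Ioo r₁ r₂)
    (ha : a ≠ 0) (ha2 : a^2 = mcAA r₁ r₂) (hM2 : 2*M*a^2 = r₁*r₂*(r₁+r₂)) :
    0 < 1 - 2*M/x - x^2/a^2 := by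
  have hx0 : (0:ℝ) < x := lt_trans h1 hx.1
  rw [mc_kfact x ha (ne_of_gt hx0) (ne_of_gt (mcAA_pos h1 h2)) ha2 hM2]
  apply div_pos
  · have e1 : 0 < x - r₁ := by linarith [hx.1]
    have e2 : 0 < r₂ - x := by linarith [hx.2]
    have e3 : 0 < x + (r₁ + r₂) := by linarith
    positivity
  · exact mul_pos (mcAA_pos h1 h2) hx0

lemma mc_kderiv {M a r₁ r₂ : ℝ} (x : ℝ) (ha : a ≠ 0) (hx : x ≠ 0) (hA : mcAA r₁ r₂ ≠ 0)
    (ha2 : a^2 = mcAA r₁ r₂) (hM2 : 2*M*a^2 = r₁*r₂*(r₁+r₂)) :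
    HasDerivAt (fun s : ℝ => 1 - 2*M/s - s^2/a^2)
      ((r₁*r₂*(r₁+r₂) - 2*x^3)/(mcAA r₁ r₂*x^2)) x := by
  have ha2' : (a:ℝ)^2 ≠ 0 := pow_ne_zero _ ha
  have h1 : HasDerivAt (fun s : ℝ => 2*M/s) (-(2*M)/x^2) x := by
    have := (hasDerivAt_inv hx).const_mul (2*M)
    simpa [div_eq_mul_inv, neg_div, mul_comm] using this
  have h2 : HasDerivAt (fun s : ℝ => s^2/a^2) (2*x/a^2) x := by
    have := (hasDerivAt_pow 2 x).div_const (a^2)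
    simpa using this
  have h : HasDerivAt (fun s : ℝ => 1 - 2*M/s - s^2/a^2) _ x :=
    ((hasDerivAt_const x (1:ℝ)).sub h1).sub h2
  convert h using 1
  have hMv : M = r₁*r₂*(r₁+r₂)/(2*a^2) := by field_simp; linarith [hM2]
  rw [hMv, ha2] at *
  field_simp
  unfold mcAA at *
  ring

lemma mc_Fderiv {M a r₁ r₂ : ℝ} (x : ℝ) (h1 : 0 < r₁) (h2 : r₁ < r₂) (hx : x ∈ Set.Ioo r₁ r₂)
    (ha : a ≠ 0) (ha2 : a^2 = mcAA r₁ r₂) (hM2 : 2*M*a^2 = r₁*r₂*(r₁+r₂)) :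
    HasDerivAt (fun s : ℝ => mcPHI r₁ r₂ s * (1 - 2*M/s - s^2/a^2) ^ (-(1:ℝ)/2))
      (x * (1 - 2*M/x - x^2/a^2) ^ (-(3:ℝ)/2)
        - mcPSI r₁ r₂ x * (1 - 2*M/x - x^2/a^2) ^ (-(1:ℝ)/2)) x := by
  have hx0 : (0:ℝ) < x := lt_trans h1 hx.1
  have hA : mcAA r₁ r₂ ≠ 0 := ne_of_gt (mcAA_pos h1 h2)
  have hk : 0 < 1 - 2*M/x - x^2/a^2 := mc_kpos x h1 h2 hx ha ha2 hM2
  have hKd := mc_kderiv x ha (ne_of_gt hx0) hA ha2 hM2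
  have hrpow := hKd.rpow_const (p := -(1:ℝ)/2) (Or.inl (ne_of_gt hk))
  have hphi : HasDerivAt (fun s : ℝ => mcPHI r₁ r₂ s) (mcAL r₁ r₂*(2*x) + mcBE r₁ r₂) x := by
    unfold mcPHI
    have := ((hasDerivAt_pow 2 x).const_mul (mcAL r₁ r₂)).add
      ((hasDerivAt_id x).const_mul (mcBE r₁ r₂))
    simp at this; exact this
  have h : HasDerivAt (fun s : ℝ => mcPHI r₁ r₂ s * (1 - 2*M/s - s^2/a^2) ^ (-(1:ℝ)/2)) _ x :=
    hphi.mul hrpow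
  convert h using 1
  have hkey : x + mcPHI r₁ r₂ x * ((r₁*r₂*(r₁+r₂) - 2*x^3)/(mcAA r₁ r₂*x^2))/2
      = (1 - 2*M/x - x^2/a^2) * mcH r₁ r₂ x := by
    rw [mc_kfact x ha (ne_of_gt hx0) hA ha2 hM2]
    exact mc_key x h1 h2 hx0
  have he : (-(1:ℝ)/2 - 1) = (-(3:ℝ)/2) := by norm_num
  rw [he]
  have hu : (1 - 2*M/x - x^2/a^2) ^ (-(1:ℝ)/2)
      = (1 - 2*M/x - x^2/a^2) * (1 - 2*M/x - x^2/a^2) ^ (-(3:ℝ)/2) := by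
    rw [show (-(1:ℝ)/2) = 1 + (-(3:ℝ)/2) by norm_num, Real.rpow_add hk, Real.rpow_one]
  rw [hu]
  unfold mcPSI
  linear_combination ((1 - 2*M/x - x^2/a^2) ^ (-(3:ℝ)/2)) * hkey

lemma mc_kcont {M a r₁ : ℝ} (h1 : 0 < r₁) :
    ContinuousOn (fun s : ℝ => 1 - 2*M/s - s^2/a^2) (Set.Ici r₁) := by
  apply ContinuousOn.sub
  · apply ContinuousOn.sub continuousOn_const
    exact ContinuousOn.div continuousOn_const continuousOn_id
      (fun x hx => ne_of_gt (lt_of_lt_of_le h1 hx))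
  · exact (Continuous.continuousOn (by continuity))

lemma mc_psicont {r₁ r₂ : ℝ} (h1 : 0 < r₁) (h2 : r₁ < r₂) :
    ContinuousOn (fun s : ℝ => mcPSI r₁ r₂ s) (Set.Ici r₁) := by
  unfold mcPSI mcH
  apply ContinuousOn.sub
  · apply ContinuousOn.div
    · exact Continuous.continuousOn (by continuity)
    · exact Continuous.continuousOn (by continuity)
    · intro x hx
      simp only [Set.mem_Ici] at hx
      have : (0:ℝ) < x + (r₁ + r₂) := by linarith
      positivity
  · exact Continuous.continuousOn (by continuity)

lemma mc_ftc {M a r₁ r₂ : ℝ} (r : ℝ) (h1 : 0 < r₁) (h2 : r₁ < r₂)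
    (ha : a ≠ 0) (ha2 : a^2 = mcAA r₁ r₂) (hM2 : 2*M*a^2 = r₁*r₂*(r₁+r₂))
    (h3M : 3*M ∈ Set.Ioo r₁ r₂) (hr : r ∈ Set.Ioo r₁ r₂) :
    ∫ s in (3*M)..r, s * (1 - 2*M/s - s^2/a^2) ^ (-(3:ℝ)/2)
      = (mcPHI r₁ r₂ r * (1 - 2*M/r - r^2/a^2) ^ (-(1:ℝ)/2)
          - mcPHI r₁ r₂ (3*M) * (1 - 2*M/(3*M) - (3*M)^2/a^2) ^ (-(1:ℝ)/2))
        + ∫ s in (3*M)..r, mcPSI r₁ r₂ s * (1 - 2*M/s - s^2/a^2) ^ (-(1:ℝ)/2) := by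
  have hsub : Set.uIcc (3*M) r ⊆ Set.Ioo r₁ r₂ := (Set.ordConnected_Ioo).uIcc_subset h3M hr
  have hsub' : Set.uIcc (3*M) r ⊆ Set.Ici r₁ := fun x hx => le_of_lt (hsub hx).1
  have hkc : ContinuousOn (fun s : ℝ => 1 - 2*M/s - s^2/a^2) (Set.uIcc (3*M) r) :=
    (mc_kcont h1).mono hsub'
  have hkne : ∀ x ∈ Set.uIcc (3*M) r, (1 - 2*M/x - x^2/a^2) ≠ 0 :=
    fun x hx => ne_of_gt (mc_kpos x h1 h2 (hsub hx) ha ha2 hM2)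
  have hc1 : ContinuousOn (fun s : ℝ => s * (1 - 2*M/s - s^2/a^2) ^ (-(3:ℝ)/2))
      (Set.uIcc (3*M) r) :=
    continuousOn_id.mul (hkc.rpow_const (fun x hx => Or.inl (hkne x hx)))
  have hc2 : ContinuousOn (fun s : ℝ => mcPSI r₁ r₂ s * (1 - 2*M/s - s^2/a^2) ^ (-(1:ℝ)/2))
      (Set.uIcc (3*M) r) :=
    ((mc_psicont h1 h2).mono hsub').mul (hkc.rpow_const (fun x hx => Or.inl (hkne x hx)))
  have hcf : ContinuousOn (fun s : ℝ => s * (1 - 2*M/s - s^2/a^2) ^ (-(3:ℝ)/2)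
      - mcPSI r₁ r₂ s * (1 - 2*M/s - s^2/a^2) ^ (-(1:ℝ)/2)) (Set.uIcc (3*M) r) := hc1.sub hc2
  have hftc := intervalIntegral.integral_eq_sub_of_hasDerivAt
    (f := fun s : ℝ => mcPHI r₁ r₂ s * (1 - 2*M/s - s^2/a^2) ^ (-(1:ℝ)/2))
    (f' := fun x : ℝ => x * (1 - 2*M/x - x^2/a^2) ^ (-(3:ℝ)/2)
      - mcPSI r₁ r₂ x * (1 - 2*M/x - x^2/a^2) ^ (-(1:ℝ)/2))
    (fun x hx => mc_Fderiv x h1 h2 (hsub hx) ha ha2 hM2)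
    (hcf.intervalIntegrable)
  rw [show (fun s : ℝ => s * (1 - 2*M/s - s^2/a^2) ^ (-(3:ℝ)/2))
      = (fun s : ℝ => (s * (1 - 2*M/s - s^2/a^2) ^ (-(3:ℝ)/2)
          - mcPSI r₁ r₂ s * (1 - 2*M/s - s^2/a^2) ^ (-(1:ℝ)/2))
        + mcPSI r₁ r₂ s * (1 - 2*M/s - s^2/a^2) ^ (-(1:ℝ)/2)) from funext (fun s => by ring)]
  rw [intervalIntegral.integral_add hcf.intervalIntegrable hc2.intervalIntegrable, hftc]

lemma mc_bound₁ {M a r₁ r₂ : ℝ} (h1 : 0 < r₁) (h2 : r₁ < r₂)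
    (ha : a ≠ 0) (ha2 : a^2 = mcAA r₁ r₂) (hM2 : 2*M*a^2 = r₁*r₂*(r₁+r₂))
    (h3M : 3*M ∈ Set.Ioo r₁ r₂) :
    ∃ K : ℝ, ∀ r ∈ Set.Ioo r₁ (3*M),
      |∫ s in (3*M)..r, mcPSI r₁ r₂ s * (1 - 2*M/s - s^2/a^2) ^ (-(1:ℝ)/2)| ≤ K := by
  have hA : mcAA r₁ r₂ ≠ 0 := ne_of_gt (mcAA_pos h1 h2)
  have h3M1 : r₁ < 3*M := h3M.1
  have h3M2 : 3*M < r₂ := h3M.2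
  have hMpos : (0:ℝ) < 3*M := lt_trans h1 h3M1
  obtain ⟨C, hC⟩ := (isCompact_Icc : IsCompact (Set.Icc r₁ (3*M))).exists_bound_of_continuousOn
    ((mc_psicont h1 h2).mono Set.Icc_subset_Ici_self)
  have hC0 : 0 ≤ C := le_trans (norm_nonneg _) (hC r₁ ⟨le_refl _, le_of_lt h3M1⟩)
  set c₀ : ℝ := (r₂ - 3*M)*(r₁+r₂)/(mcAA r₁ r₂*(3*M)) with hc₀def
  have hc₀ : 0 < c₀ := by
    apply div_pos
    · have : (0:ℝ) < r₂ - 3*M := by linarith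
      nlinarith
    · exact mul_pos (mcAA_pos h1 h2) hMpos
  refine ⟨C * c₀ ^ (-(1:ℝ)/2) * (2*(3*M - r₁)^((1:ℝ)/2)), ?_⟩
  intro r hr
  -- pointwise bound on Icc r (3M)
  have hpt : ∀ s ∈ Set.Icc r (3*M),
      ‖mcPSI r₁ r₂ s * (1 - 2*M/s - s^2/a^2) ^ (-(1:ℝ)/2)‖
        ≤ C * c₀ ^ (-(1:ℝ)/2) * (s - r₁) ^ (-(1:ℝ)/2) := by
    intro s hs
    have hs1 : r₁ < s := lt_of_lt_of_le hr.1 hs.1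
    have hs2 : s ≤ 3*M := hs.2
    have hs0 : (0:ℝ) < s := lt_trans h1 hs1
    have hmem : s ∈ Set.Ioo r₁ r₂ := ⟨hs1, lt_of_le_of_lt hs2 h3M2⟩
    have hkpos := mc_kpos (M := M) (a := a) s h1 h2 hmem ha ha2 hM2
    have hklow : c₀*(s - r₁) ≤ 1 - 2*M/s - s^2/a^2 := by
      rw [mc_kfact s ha (ne_of_gt hs0) hA ha2 hM2, le_div_iff₀ (mul_pos (mcAA_pos h1 h2) hs0)]
      rw [hc₀def]
      rw [div_mul_eq_mul_div, div_mul_eq_mul_div, div_le_iff₀ (mul_pos (mcAA_pos h1 h2) hMpos)]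
      have e1 : (0:ℝ) ≤ s - r₁ := by linarith
      have e2 : (r₂ - 3*M)*(r₁+r₂)*s ≤ (r₂-s)*(s+(r₁+r₂))*(3*M) := by
        have f2 : r₂ - 3*M ≤ r₂ - s := by linarith
        have f3 : r₁ + r₂ ≤ s + (r₁+r₂) := by linarith
        have f4 : (0:ℝ) ≤ r₁ + r₂ := by linarith
        have f5 : (0:ℝ) ≤ r₂ - s := by linarith
        have g1 : (r₂ - 3*M)*(r₁+r₂) ≤ (r₂ - s)*(s+(r₁+r₂)) := mul_le_mul f2 f3 f4 f5
        have g2 : (0:ℝ) ≤ (r₂ - s)*(s+(r₁+r₂)) := by nlinarith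
        exact mul_le_mul g1 hs2 (le_of_lt hs0) g2
      nlinarith [mcAA_pos h1 h2, mul_nonneg e1 (sub_nonneg.mpr e2)]
    have hcpos : 0 < c₀*(s - r₁) := mul_pos hc₀ (by linarith)
    have hrle : (1 - 2*M/s - s^2/a^2) ^ (-(1:ℝ)/2) ≤ (c₀*(s - r₁)) ^ (-(1:ℝ)/2) :=
      Real.rpow_le_rpow_of_nonpos hcpos hklow (by norm_num)
    have hmul : (c₀*(s - r₁)) ^ (-(1:ℝ)/2) = c₀ ^ (-(1:ℝ)/2) * (s - r₁) ^ (-(1:ℝ)/2) :=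
      Real.mul_rpow (le_of_lt hc₀) (by linarith)
    have hknn : (0:ℝ) ≤ (1 - 2*M/s - s^2/a^2) ^ (-(1:ℝ)/2) := Real.rpow_nonneg (le_of_lt hkpos) _
    calc ‖mcPSI r₁ r₂ s * (1 - 2*M/s - s^2/a^2) ^ (-(1:ℝ)/2)‖
        = ‖mcPSI r₁ r₂ s‖ * (1 - 2*M/s - s^2/a^2) ^ (-(1:ℝ)/2) := by
          rw [norm_mul, Real.norm_of_nonneg hknn]
      _ ≤ C * (c₀ ^ (-(1:ℝ)/2) * (s - r₁) ^ (-(1:ℝ)/2)) := by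
          rw [← hmul]
          exact mul_le_mul (hC s ⟨le_of_lt hs1, hs2⟩) hrle hknn hC0
      _ = C * c₀ ^ (-(1:ℝ)/2) * (s - r₁) ^ (-(1:ℝ)/2) := by ring
  -- integrabilities on [r, 3M]
  have hrle3 : r ≤ 3*M := le_of_lt hr.2
  have hsubIoo : Set.Icc r (3*M) ⊆ Set.Ioo r₁ r₂ :=
    fun x hx => ⟨lt_of_lt_of_le hr.1 hx.1, lt_of_le_of_lt hx.2 h3M2⟩
  have huIcc : Set.uIcc r (3*M) = Set.Icc r (3*M) := Set.uIcc_of_le hrle3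
  have hkcI : ContinuousOn (fun s : ℝ => 1 - 2*M/s - s^2/a^2) (Set.Icc r (3*M)) :=
    (mc_kcont h1).mono (fun x hx => le_of_lt (hsubIoo hx).1)
  have hg_cont : ContinuousOn
      (fun s : ℝ => mcPSI r₁ r₂ s * (1 - 2*M/s - s^2/a^2) ^ (-(1:ℝ)/2)) (Set.Icc r (3*M)) :=
    ((mc_psicont h1 h2).mono (fun x hx => le_of_lt (hsubIoo hx).1)).mul
      (hkcI.rpow_const (fun x hx =>
        Or.inl (ne_of_gt (mc_kpos x h1 h2 (hsubIoo hx) ha ha2 hM2))))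
  have hgi : IntervalIntegrable
      (fun s : ℝ => mcPSI r₁ r₂ s * (1 - 2*M/s - s^2/a^2) ^ (-(1:ℝ)/2)) volume r (3*M) :=
    (hg_cont.mono (by rw [huIcc])).intervalIntegrable
  have hbi : IntervalIntegrable
      (fun s : ℝ => C * c₀ ^ (-(1:ℝ)/2) * (s - r₁) ^ (-(1:ℝ)/2)) volume r (3*M) := by
    apply ContinuousOn.intervalIntegrable
    apply ContinuousOn.mul continuousOn_const
    apply ContinuousOn.rpow_const
    · exact (continuousOn_id.sub continuousOn_const)
    · intro x hx
      rw [huIcc] at hx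
      have hxx : r₁ < x := lt_of_lt_of_le hr.1 hx.1
      exact Or.inl (sub_ne_zero.mpr hxx.ne')
  calc |∫ s in (3*M)..r, mcPSI r₁ r₂ s * (1 - 2*M/s - s^2/a^2) ^ (-(1:ℝ)/2)|
      = |∫ s in r..(3*M), mcPSI r₁ r₂ s * (1 - 2*M/s - s^2/a^2) ^ (-(1:ℝ)/2)| := by
        rw [intervalIntegral.integral_symm, abs_neg]
    _ = ‖∫ s in r..(3*M), mcPSI r₁ r₂ s * (1 - 2*M/s - s^2/a^2) ^ (-(1:ℝ)/2)‖ :=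
        (Real.norm_eq_abs _).symm
    _ ≤ ∫ s in r..(3*M), ‖mcPSI r₁ r₂ s * (1 - 2*M/s - s^2/a^2) ^ (-(1:ℝ)/2)‖ :=
        intervalIntegral.norm_integral_le_integral_norm hrle3
    _ ≤ ∫ s in r..(3*M), C * c₀ ^ (-(1:ℝ)/2) * (s - r₁) ^ (-(1:ℝ)/2) := by
        apply intervalIntegral.integral_mono_on hrle3 hgi.norm hbi hpt
    _ = C * c₀ ^ (-(1:ℝ)/2) * ∫ s in r..(3*M), (s - r₁) ^ (-(1:ℝ)/2) := by
        rw [intervalIntegral.integral_const_mul]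
    _ ≤ C * c₀ ^ (-(1:ℝ)/2) * (2*(3*M - r₁)^((1:ℝ)/2)) := by
        apply mul_le_mul_of_nonneg_left _ (mul_nonneg hC0 (Real.rpow_nonneg (le_of_lt hc₀) _))
        rw [intervalIntegral.integral_comp_sub_right (fun u : ℝ => u ^ (-(1:ℝ)/2)) r₁]
        rw [integral_rpow (Or.inl (by norm_num))]
        have h1' : (0:ℝ) ≤ r - r₁ := le_of_lt (by linarith [hr.1])
        rw [show (-(1:ℝ)/2 + 1) = (1:ℝ)/2 by norm_num]
        rw [div_le_iff₀ (by norm_num : (0:ℝ) < 1/2)]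
        nlinarith [Real.rpow_nonneg h1' ((1:ℝ)/2)]

lemma mc_bound₂ {M a r₁ r₂ : ℝ} (h1 : 0 < r₁) (h2 : r₁ < r₂)
    (ha : a ≠ 0) (ha2 : a^2 = mcAA r₁ r₂) (hM2 : 2*M*a^2 = r₁*r₂*(r₁+r₂))
    (h3M : 3*M ∈ Set.Ioo r₁ r₂) :
    ∃ K : ℝ, ∀ r ∈ Set.Ioo (3*M) r₂,
      |∫ s in (3*M)..r, mcPSI r₁ r₂ s * (1 - 2*M/s - s^2/a^2) ^ (-(1:ℝ)/2)| ≤ K := by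
  have hA : mcAA r₁ r₂ ≠ 0 := ne_of_gt (mcAA_pos h1 h2)
  have h3M1 : r₁ < 3*M := h3M.1
  have h3M2 : 3*M < r₂ := h3M.2
  have hMpos : (0:ℝ) < 3*M := lt_trans h1 h3M1
  have hr₂pos : (0:ℝ) < r₂ := lt_trans h1 h2
  obtain ⟨C, hC⟩ := (isCompact_Icc : IsCompact (Set.Icc (3*M) r₂)).exists_bound_of_continuousOn
    ((mc_psicont h1 h2).mono (fun x hx => le_of_lt (lt_of_lt_of_le h3M1 hx.1)))
  have hC0 : 0 ≤ C := le_trans (norm_nonneg _) (hC (3*M) ⟨le_refl _, le_of_lt h3M2⟩)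
  set c₀ : ℝ := (3*M - r₁)*(r₁+r₂)/(mcAA r₁ r₂*r₂) with hc₀def
  have hc₀ : 0 < c₀ := by
    apply div_pos
    · have : (0:ℝ) < 3*M - r₁ := by linarith
      nlinarith
    · exact mul_pos (mcAA_pos h1 h2) hr₂pos
  refine ⟨C * c₀ ^ (-(1:ℝ)/2) * (2*(r₂ - 3*M)^((1:ℝ)/2)), ?_⟩
  intro r hr
  have hpt : ∀ s ∈ Set.Icc (3*M) r,
      ‖mcPSI r₁ r₂ s * (1 - 2*M/s - s^2/a^2) ^ (-(1:ℝ)/2)‖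
        ≤ C * c₀ ^ (-(1:ℝ)/2) * (r₂ - s) ^ (-(1:ℝ)/2) := by
    intro s hs
    have hs1 : 3*M ≤ s := hs.1
    have hs2 : s < r₂ := lt_of_le_of_lt hs.2 hr.2
    have hs0 : (0:ℝ) < s := lt_of_lt_of_le hMpos hs1
    have hmem : s ∈ Set.Ioo r₁ r₂ := ⟨lt_of_lt_of_le h3M1 hs1, hs2⟩
    have hkpos := mc_kpos (M := M) (a := a) s h1 h2 hmem ha ha2 hM2
    have hklow : c₀*(r₂ - s) ≤ 1 - 2*M/s - s^2/a^2 := by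
      rw [mc_kfact s ha (ne_of_gt hs0) hA ha2 hM2, le_div_iff₀ (mul_pos (mcAA_pos h1 h2) hs0)]
      rw [hc₀def]
      rw [div_mul_eq_mul_div, div_mul_eq_mul_div, div_le_iff₀ (mul_pos (mcAA_pos h1 h2) hr₂pos)]
      have e1 : (0:ℝ) ≤ r₂ - s := by linarith
      have e2 : (3*M - r₁)*(r₁+r₂)*s ≤ (s-r₁)*(s+(r₁+r₂))*r₂ := by
        have f2 : 3*M - r₁ ≤ s - r₁ := by linarith
        have f3 : r₁ + r₂ ≤ s + (r₁+r₂) := by linarith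
        have f4 : (0:ℝ) ≤ r₁ + r₂ := by linarith
        have f5 : (0:ℝ) ≤ s - r₁ := by linarith
        have g1 : (3*M - r₁)*(r₁+r₂) ≤ (s - r₁)*(s+(r₁+r₂)) := mul_le_mul f2 f3 f4 f5
        have g2 : (0:ℝ) ≤ (s - r₁)*(s+(r₁+r₂)) := by nlinarith
        exact mul_le_mul g1 (le_of_lt hs2) (le_of_lt hs0) g2
      nlinarith [mcAA_pos h1 h2, mul_nonneg e1 (sub_nonneg.mpr e2)]
    have hcpos : 0 < c₀*(r₂ - s) := mul_pos hc₀ (by linarith)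
    have hrle : (1 - 2*M/s - s^2/a^2) ^ (-(1:ℝ)/2) ≤ (c₀*(r₂ - s)) ^ (-(1:ℝ)/2) :=
      Real.rpow_le_rpow_of_nonpos hcpos hklow (by norm_num)
    have hmul : (c₀*(r₂ - s)) ^ (-(1:ℝ)/2) = c₀ ^ (-(1:ℝ)/2) * (r₂ - s) ^ (-(1:ℝ)/2) :=
      Real.mul_rpow (le_of_lt hc₀) (by linarith)
    have hknn : (0:ℝ) ≤ (1 - 2*M/s - s^2/a^2) ^ (-(1:ℝ)/2) := Real.rpow_nonneg (le_of_lt hkpos) _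
    calc ‖mcPSI r₁ r₂ s * (1 - 2*M/s - s^2/a^2) ^ (-(1:ℝ)/2)‖
        = ‖mcPSI r₁ r₂ s‖ * (1 - 2*M/s - s^2/a^2) ^ (-(1:ℝ)/2) := by
          rw [norm_mul, Real.norm_of_nonneg hknn]
      _ ≤ C * (c₀ ^ (-(1:ℝ)/2) * (r₂ - s) ^ (-(1:ℝ)/2)) := by
          rw [← hmul]
          exact mul_le_mul (hC s ⟨hs1, le_of_lt hs2⟩) hrle hknn hC0
      _ = C * c₀ ^ (-(1:ℝ)/2) * (r₂ - s) ^ (-(1:ℝ)/2) := by ring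
  have hrle3 : 3*M ≤ r := le_of_lt hr.1
  have hsubIoo : Set.Icc (3*M) r ⊆ Set.Ioo r₁ r₂ :=
    fun x hx => ⟨lt_of_lt_of_le h3M1 hx.1, lt_of_le_of_lt hx.2 hr.2⟩
  have huIcc : Set.uIcc (3*M) r = Set.Icc (3*M) r := Set.uIcc_of_le hrle3
  have hkcI : ContinuousOn (fun s : ℝ => 1 - 2*M/s - s^2/a^2) (Set.Icc (3*M) r) :=
    (mc_kcont h1).mono (fun x hx => le_of_lt (hsubIoo hx).1)
  have hg_cont : ContinuousOn
      (fun s : ℝ => mcPSI r₁ r₂ s * (1 - 2*M/s - s^2/a^2) ^ (-(1:ℝ)/2)) (Set.Icc (3*M) r) :=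
    ((mc_psicont h1 h2).mono (fun x hx => le_of_lt (hsubIoo hx).1)).mul
      (hkcI.rpow_const (fun x hx =>
        Or.inl (ne_of_gt (mc_kpos x h1 h2 (hsubIoo hx) ha ha2 hM2))))
  have hgi : IntervalIntegrable
      (fun s : ℝ => mcPSI r₁ r₂ s * (1 - 2*M/s - s^2/a^2) ^ (-(1:ℝ)/2)) volume (3*M) r :=
    (hg_cont.mono (by rw [huIcc])).intervalIntegrable
  have hbi : IntervalIntegrable
      (fun s : ℝ => C * c₀ ^ (-(1:ℝ)/2) * (r₂ - s) ^ (-(1:ℝ)/2)) volume (3*M) r := by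
    apply ContinuousOn.intervalIntegrable
    apply ContinuousOn.mul continuousOn_const
    apply ContinuousOn.rpow_const
    · exact (continuousOn_const.sub continuousOn_id)
    · intro x hx
      rw [huIcc] at hx
      have hxx : x < r₂ := lt_of_le_of_lt hx.2 hr.2
      exact Or.inl (sub_ne_zero.mpr (ne_of_gt (by linarith)))
  calc |∫ s in (3*M)..r, mcPSI r₁ r₂ s * (1 - 2*M/s - s^2/a^2) ^ (-(1:ℝ)/2)|
      = ‖∫ s in (3*M)..r, mcPSI r₁ r₂ s * (1 - 2*M/s - s^2/a^2) ^ (-(1:ℝ)/2)‖ :=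
        (Real.norm_eq_abs _).symm
    _ ≤ ∫ s in (3*M)..r, ‖mcPSI r₁ r₂ s * (1 - 2*M/s - s^2/a^2) ^ (-(1:ℝ)/2)‖ :=
        intervalIntegral.norm_integral_le_integral_norm hrle3
    _ ≤ ∫ s in (3*M)..r, C * c₀ ^ (-(1:ℝ)/2) * (r₂ - s) ^ (-(1:ℝ)/2) := by
        apply intervalIntegral.integral_mono_on hrle3 hgi.norm hbi hpt
    _ = C * c₀ ^ (-(1:ℝ)/2) * ∫ s in (3*M)..r, (r₂ - s) ^ (-(1:ℝ)/2) := by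
        rw [intervalIntegral.integral_const_mul]
    _ ≤ C * c₀ ^ (-(1:ℝ)/2) * (2*(r₂ - 3*M)^((1:ℝ)/2)) := by
        apply mul_le_mul_of_nonneg_left _ (mul_nonneg hC0 (Real.rpow_nonneg (le_of_lt hc₀) _))
        rw [intervalIntegral.integral_comp_sub_left (fun u : ℝ => u ^ (-(1:ℝ)/2)) r₂]
        rw [integral_rpow (Or.inl (by norm_num))]
        have h1' : (0:ℝ) ≤ r₂ - r := le_of_lt (by linarith [hr.2])
        rw [show (-(1:ℝ)/2 + 1) = (1:ℝ)/2 by norm_num]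
        rw [div_le_iff₀ (by norm_num : (0:ℝ) < 1/2)]
        nlinarith [Real.rpow_nonneg h1' ((1:ℝ)/2)]

set_option maxHeartbeats 2000000 in
/-- Limits of `κ(r)^(1/2)·∫_{3M}^r s·κ(s)^(-3/2) ds` as `r` tends to the two
positive roots `r₁ < r₂` of `κ(r) = 1 - 2M/r - r²/a²` (closed, K = +1 McVittie case,
with `a > 3√3·M`), obtained via l'Hôpital's rule. -/
theorem mcvittie_closed_boundary_limits (M a r₁ r₂ : ℝ) (hM : 0 < M)
    (ha : 3 * Real.sqrt 3 * M < a)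
    (hr₁pos : 0 < r₁) (hlt : r₁ < r₂)
    (hroot₁ : 1 - 2 * M / r₁ - r₁ ^ 2 / a ^ 2 = 0)
    (hroot₂ : 1 - 2 * M / r₂ - r₂ ^ 2 / a ^ 2 = 0)
    (hr₁mem : r₁ ∈ Set.Ioo 0 (a / Real.sqrt 3))
    (hr₂mem : r₂ ∈ Set.Ioo (a / Real.sqrt 3) a) :
    Filter.Tendsto
      (fun r : ℝ => (1 - 2 * M / r - r ^ 2 / a ^ 2) ^ ((1 : ℝ) / 2) *
        ∫ s in (3 * M)..r, s * (1 - 2 * M / s - s ^ 2 / a ^ 2) ^ (-(3 : ℝ) / 2))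
      (nhdsWithin r₁ (Set.Ioi r₁))
      (nhds (2 * a ^ 2 * r₁ ^ 2 / (3 * r₁ ^ 2 - a ^ 2))) ∧
    Filter.Tendsto
      (fun r : ℝ => (1 - 2 * M / r - r ^ 2 / a ^ 2) ^ ((1 : ℝ) / 2) *
        ∫ s in (3 * M)..r, s * (1 - 2 * M / s - s ^ 2 / a ^ 2) ^ (-(3 : ℝ) / 2))
      (nhdsWithin r₂ (Set.Iio r₂))
      (nhds (2 * a ^ 2 * r₂ ^ 2 / (3 * r₂ ^ 2 - a ^ 2))) := by
  have hs3 : (0:ℝ) < Real.sqrt 3 := Real.sqrt_pos.mpr (by norm_num)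
  have ha0 : 0 < a := lt_trans (by positivity) ha
  have ha' : a ≠ 0 := ne_of_gt ha0
  have hr₂pos : 0 < r₂ := lt_trans hr₁pos hlt
  have hr₁ne : r₁ ≠ 0 := ne_of_gt hr₁pos
  have hr₂ne : r₂ ≠ 0 := ne_of_gt hr₂pos
  have ha27 : 27*M^2 < a^2 := by
    have hc : 0 < 3*Real.sqrt 3*M := by positivity
    have h1 := mul_pos (sub_pos.mpr ha) (by linarith : (0:ℝ) < a + 3*Real.sqrt 3*M)
    nlinarith [Real.sq_sqrt (by norm_num : (0:ℝ) ≤ 3), h1]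
  have e₁ : a^2*r₁ - 2*M*a^2 - r₁^3 = 0 := by
    field_simp at hroot₁; linear_combination hroot₁
  have e₂ : a^2*r₂ - 2*M*a^2 - r₂^3 = 0 := by
    field_simp at hroot₂; linear_combination hroot₂
  have h12 : r₁ - r₂ ≠ 0 := sub_ne_zero.mpr (ne_of_lt hlt)
  have ha2 : a^2 = mcAA r₁ r₂ := by
    unfold mcAA
    apply mul_left_cancel₀ h12
    linear_combination e₁ - e₂
  have hM2 : 2*M*a^2 = r₁*r₂*(r₁+r₂) := by
    have h := ha2; unfold mcAA at h
    linear_combination -e₁ + r₁*h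
  have hA := mcAA_pos hr₁pos hlt
  have hM0 : (0:ℝ) < 3*M := by linarith
  have hk3 : 0 < 1 - 2*M/(3*M) - (3*M)^2/a^2 := by
    have hrw : 1 - 2*M/(3*M) - (3*M)^2/a^2 = 1/3 - 9*M^2/a^2 := by
      field_simp; ring
    rw [hrw, sub_pos, div_lt_div_iff₀ (by positivity) (by norm_num : (0:ℝ) < 3)]
    nlinarith
  have hprod : 0 < (3*M-r₁)*(r₂-3*M) := by
    have hk3' := hk3
    rw [mc_kfact (M:=M) (a:=a) (3*M) ha' (ne_of_gt hM0) (ne_of_gt hA) ha2 hM2] at hk3'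
    have hden : 0 < mcAA r₁ r₂ * (3*M) := by positivity
    rcases div_pos_iff.mp hk3' with ⟨hn, _⟩ | ⟨_, hd⟩
    · nlinarith [hn]
    · linarith
  have h3M1 : r₁ < 3*M := by
    by_contra hc; push_neg at hc
    nlinarith [hprod]
  have h3M2 : 3*M < r₂ := by
    by_contra hc; push_neg at hc
    nlinarith [hprod]
  have h3M : 3*M ∈ Set.Ioo r₁ r₂ := ⟨h3M1, h3M2⟩
  have hca : ∀ x : ℝ, x ≠ 0 → ContinuousAt (fun s : ℝ => 1 - 2*M/s - s^2/a^2) x := by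
    intro x hx
    apply ContinuousAt.sub
    · exact ContinuousAt.sub continuousAt_const (continuousAt_const.div continuousAt_id hx)
    · fun_prop
  constructor
  · -- limit at r₁ from the right
    obtain ⟨K, hK⟩ := mc_bound₁ hr₁pos hlt ha' ha2 hM2 h3M
    have hKnn : 0 ≤ K :=
      le_trans (abs_nonneg _) (hK ((r₁+3*M)/2) ⟨by linarith, by linarith⟩)
    have hev : Set.Ioo r₁ (3*M) ∈ nhdsWithin r₁ (Set.Ioi r₁) :=
      Ioo_mem_nhdsGT_of_mem ⟨le_refl r₁, h3M1⟩
    have hktend : Filter.Tendsto (fun r : ℝ => 1 - 2*M/r - r^2/a^2)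
        (nhdsWithin r₁ (Set.Ioi r₁)) (nhds 0) := by
      have h : Filter.Tendsto (fun s : ℝ => 1 - 2*M/s - s^2/a^2)
          (nhdsWithin r₁ (Set.Ioi r₁)) (nhds (1 - 2*M/r₁ - r₁^2/a^2)) :=
        ((hca r₁ hr₁ne).tendsto).mono_left nhdsWithin_le_nhds
      rwa [show 1 - 2*M/r₁ - r₁^2/a^2 = 0 from hroot₁] at h
    have hsq : Filter.Tendsto (fun r : ℝ => (1 - 2*M/r - r^2/a^2) ^ ((1:ℝ)/2))
        (nhdsWithin r₁ (Set.Ioi r₁)) (nhds 0) := by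
      have := hktend.rpow_const (p := (1:ℝ)/2) (Or.inr (by norm_num))
      simpa [Real.zero_rpow (by norm_num : (1:ℝ)/2 ≠ 0)] using this
    set c3 : ℝ := mcPHI r₁ r₂ (3*M) * (1 - 2*M/(3*M) - (3*M)^2/a^2) ^ (-(1:ℝ)/2) with hc3
    have hval : mcPHI r₁ r₂ r₁ = 2*a^2*r₁^2/(3*r₁^2 - a^2) := by
      rw [ha2]; exact mc_phi_val₁ hr₁pos hlt
    have hφ : Filter.Tendsto (fun r : ℝ => mcPHI r₁ r₂ r)
        (nhdsWithin r₁ (Set.Ioi r₁)) (nhds (2*a^2*r₁^2/(3*r₁^2 - a^2))) := by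
      have hcont : Continuous (fun r : ℝ => mcPHI r₁ r₂ r) := by
        unfold mcPHI; fun_prop
      have h : Filter.Tendsto (fun r : ℝ => mcPHI r₁ r₂ r)
          (nhdsWithin r₁ (Set.Ioi r₁)) (nhds (mcPHI r₁ r₂ r₁)) :=
        (hcont.continuousAt (x := r₁)).tendsto.mono_left nhdsWithin_le_nhds
      rwa [hval] at h
    have hB : Filter.Tendsto (fun r : ℝ => c3 * (1 - 2*M/r - r^2/a^2) ^ ((1:ℝ)/2))
        (nhdsWithin r₁ (Set.Ioi r₁)) (nhds 0) := by
      simpa using hsq.const_mul c3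
    have hC : Filter.Tendsto (fun r : ℝ => (1 - 2*M/r - r^2/a^2) ^ ((1:ℝ)/2) *
        ∫ s in (3*M)..r, mcPSI r₁ r₂ s * (1 - 2*M/s - s^2/a^2) ^ (-(1:ℝ)/2))
        (nhdsWithin r₁ (Set.Ioi r₁)) (nhds 0) := by
      apply tendsto_of_tendsto_of_tendsto_of_le_of_le'
        (g := fun r : ℝ => -(K * (1 - 2*M/r - r^2/a^2) ^ ((1:ℝ)/2)))
        (h := fun r : ℝ => K * (1 - 2*M/r - r^2/a^2) ^ ((1:ℝ)/2))
      · simpa using (hsq.const_mul K).neg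
      · simpa using hsq.const_mul K
      · filter_upwards [hev] with r hr
        have hb := abs_le.mp (hK r hr)
        have hnn : (0:ℝ) ≤ (1 - 2*M/r - r^2/a^2) ^ ((1:ℝ)/2) := by
          have hκpos := mc_kpos (M:=M) (a:=a) r hr₁pos hlt
            ⟨hr.1, lt_trans hr.2 h3M2⟩ ha' ha2 hM2
          exact Real.rpow_nonneg (le_of_lt hκpos) _
        have h1 := mul_le_mul_of_nonneg_left hb.1 hnn
        linarith [h1]
      · filter_upwards [hev] with r hr
        have hb := abs_le.mp (hK r hr)
        have hnn : (0:ℝ) ≤ (1 - 2*M/r - r^2/a^2) ^ ((1:ℝ)/2) := by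
          have hκpos := mc_kpos (M:=M) (a:=a) r hr₁pos hlt
            ⟨hr.1, lt_trans hr.2 h3M2⟩ ha' ha2 hM2
          exact Real.rpow_nonneg (le_of_lt hκpos) _
        have h1 := mul_le_mul_of_nonneg_left hb.2 hnn
        linarith [h1]
    have hG := (hφ.sub hB).add hC
    rw [sub_zero, add_zero] at hG
    apply hG.congr'
    filter_upwards [hev] with r hr
    have hrIoo : r ∈ Set.Ioo r₁ r₂ := ⟨hr.1, lt_trans hr.2 h3M2⟩
    have hκpos := mc_kpos (M:=M) (a:=a) r hr₁pos hlt hrIoo ha' ha2 hM2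
    have hone : (1 - 2*M/r - r^2/a^2) ^ ((1:ℝ)/2) * (1 - 2*M/r - r^2/a^2) ^ (-(1:ℝ)/2)
        = 1 := by
      rw [← Real.rpow_add hκpos, show (1:ℝ)/2 + -(1:ℝ)/2 = 0 by norm_num, Real.rpow_zero]
    rw [mc_ftc (M:=M) (a:=a) r hr₁pos hlt ha' ha2 hM2 h3M hrIoo, hc3]
    linear_combination (-(mcPHI r₁ r₂ r)) * hone
  · -- limit at r₂ from the left
    obtain ⟨K, hK⟩ := mc_bound₂ hr₁pos hlt ha' ha2 hM2 h3M
    have hKnn : 0 ≤ K :=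
      le_trans (abs_nonneg _) (hK ((3*M+r₂)/2) ⟨by linarith, by linarith⟩)
    have hev : Set.Ioo (3*M) r₂ ∈ nhdsWithin r₂ (Set.Iio r₂) :=
      Ioo_mem_nhdsLT_of_mem ⟨h3M2, le_refl r₂⟩
    have hktend : Filter.Tendsto (fun r : ℝ => 1 - 2*M/r - r^2/a^2)
        (nhdsWithin r₂ (Set.Iio r₂)) (nhds 0) := by
      have h : Filter.Tendsto (fun s : ℝ => 1 - 2*M/s - s^2/a^2)
          (nhdsWithin r₂ (Set.Iio r₂)) (nhds (1 - 2*M/r₂ - r₂^2/a^2)) :=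
        ((hca r₂ hr₂ne).tendsto).mono_left nhdsWithin_le_nhds
      rwa [show 1 - 2*M/r₂ - r₂^2/a^2 = 0 from hroot₂] at h
    have hsq : Filter.Tendsto (fun r : ℝ => (1 - 2*M/r - r^2/a^2) ^ ((1:ℝ)/2))
        (nhdsWithin r₂ (Set.Iio r₂)) (nhds 0) := by
      have := hktend.rpow_const (p := (1:ℝ)/2) (Or.inr (by norm_num))
      simpa [Real.zero_rpow (by norm_num : (1:ℝ)/2 ≠ 0)] using this
    set c3 : ℝ := mcPHI r₁ r₂ (3*M) * (1 - 2*M/(3*M) - (3*M)^2/a^2) ^ (-(1:ℝ)/2) with hc3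
    have hval : mcPHI r₁ r₂ r₂ = 2*a^2*r₂^2/(3*r₂^2 - a^2) := by
      rw [ha2]; exact mc_phi_val₂ hr₁pos hlt
    have hφ : Filter.Tendsto (fun r : ℝ => mcPHI r₁ r₂ r)
        (nhdsWithin r₂ (Set.Iio r₂)) (nhds (2*a^2*r₂^2/(3*r₂^2 - a^2))) := by
      have hcont : Continuous (fun r : ℝ => mcPHI r₁ r₂ r) := by
        unfold mcPHI; fun_prop
      have h : Filter.Tendsto (fun r : ℝ => mcPHI r₁ r₂ r)
          (nhdsWithin r₂ (Set.Iio r₂)) (nhds (mcPHI r₁ r₂ r₂)) :=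
        (hcont.continuousAt (x := r₂)).tendsto.mono_left nhdsWithin_le_nhds
      rwa [hval] at h
    have hB : Filter.Tendsto (fun r : ℝ => c3 * (1 - 2*M/r - r^2/a^2) ^ ((1:ℝ)/2))
        (nhdsWithin r₂ (Set.Iio r₂)) (nhds 0) := by
      simpa using hsq.const_mul c3
    have hC : Filter.Tendsto (fun r : ℝ => (1 - 2*M/r - r^2/a^2) ^ ((1:ℝ)/2) *
        ∫ s in (3*M)..r, mcPSI r₁ r₂ s * (1 - 2*M/s - s^2/a^2) ^ (-(1:ℝ)/2))
        (nhdsWithin r₂ (Set.Iio r₂)) (nhds 0) := by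
      apply tendsto_of_tendsto_of_tendsto_of_le_of_le'
        (g := fun r : ℝ => -(K * (1 - 2*M/r - r^2/a^2) ^ ((1:ℝ)/2)))
        (h := fun r : ℝ => K * (1 - 2*M/r - r^2/a^2) ^ ((1:ℝ)/2))
      · simpa using (hsq.const_mul K).neg
      · simpa using hsq.const_mul K
      · filter_upwards [hev] with r hr
        have hb := abs_le.mp (hK r hr)
        have hnn : (0:ℝ) ≤ (1 - 2*M/r - r^2/a^2) ^ ((1:ℝ)/2) := by
          have hκpos := mc_kpos (M:=M) (a:=a) r hr₁pos hlt
            ⟨lt_trans h3M1 hr.1, hr.2⟩ ha' ha2 hM2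
          exact Real.rpow_nonneg (le_of_lt hκpos) _
        have h1 := mul_le_mul_of_nonneg_left hb.1 hnn
        linarith [h1]
      · filter_upwards [hev] with r hr
        have hb := abs_le.mp (hK r hr)
        have hnn : (0:ℝ) ≤ (1 - 2*M/r - r^2/a^2) ^ ((1:ℝ)/2) := by
          have hκpos := mc_kpos (M:=M) (a:=a) r hr₁pos hlt
            ⟨lt_trans h3M1 hr.1, hr.2⟩ ha' ha2 hM2
          exact Real.rpow_nonneg (le_of_lt hκpos) _
        have h1 := mul_le_mul_of_nonneg_left hb.2 hnn
        linarith [h1]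
    have hG := (hφ.sub hB).add hC
    rw [sub_zero, add_zero] at hG
    apply hG.congr'
    filter_upwards [hev] with r hr
    have hrIoo : r ∈ Set.Ioo r₁ r₂ := ⟨lt_trans h3M1 hr.1, hr.2⟩
    have hκpos := mc_kpos (M:=M) (a:=a) r hr₁pos hlt hrIoo ha' ha2 hM2
    have hone : (1 - 2*M/r - r^2/a^2) ^ ((1:ℝ)/2) * (1 - 2*M/r - r^2/a^2) ^ (-(1:ℝ)/2)
        = 1 := by
      rw [← Real.rpow_add hκpos, show (1:ℝ)/2 + -(1:ℝ)/2 = 0 by norm_num, Real.rpow_zero]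
    rw [mc_ftc (M:=M) (a:=a) r hr₁pos hlt ha' ha2 hM2 h3M hrIoo, hc3]
    linear_combination (-(mcPHI r₁ r₂ r)) * hone
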